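/- Define the bounded sequence y : ℕ → ℝ by y_k = 2 if there exists an integer n ≥ 1 with 2^{2n} < k ≤ 2^{2n+1}, and y_k = 1 otherwise. Then the Cesàro means Cy do not converge, yet B(y) = 3/2 for every Cesàro-invariant Banach limit B (i.e., every Banach limit B with B ∘ C = B). -/

import Mathlib

open scoped BigOperators

/-- Membership in `l_∞`: the sequence is bounded. -/
def Bdd (x : ℕ → ℝ) : Prop := ∃ M : ℝ, ∀ n : ℕ, |x n| ≤ M

/-- The right shift `S` on sequences: `(Sx)_0 = 0`, `(Sx)_{n+1} = x_n`. -/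
def Sfun (x : ℕ → ℝ) : ℕ → ℝ
  | 0 => 0
  | n + 1 => x n

/-- `B` is a Banach limit on `l_∞`: a positive, normalised, shift-invariant linear
functional. -/
def IsBanachLimit (B : (ℕ → ℝ) → ℝ) : Prop :=
  (∀ x y : ℕ → ℝ, Bdd x → Bdd y → B (x + y) = B x + B y) ∧
  (∀ (c : ℝ) (x : ℕ → ℝ), Bdd x → B (c • x) = c * B x) ∧
  (∀ x : ℕ → ℝ, Bdd x → 0 ≤ x → 0 ≤ B x) ∧
  B (fun _ => (1 : ℝ)) = 1 ∧
  (∀ x : ℕ → ℝ, Bdd x → B (Sfun x) = B x)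

/-- The Cesàro operator `C` on sequences: `(Cx)_n = (1/(n+1)) Σ_{k=0}^n x_k`. -/
noncomputable def Ces (x : ℕ → ℝ) : ℕ → ℝ := fun n =>
  (∑ k ∈ Finset.range (n + 1), x k) / ((n : ℝ) + 1)

open scoped Classical in
/-- The sequence `y` equal to `2` on the blocks `(2^{2n}, 2^{2n+1}]` (`n ≥ 1`) and
`1` elsewhere. -/
noncomputable def yseq2 : ℕ → ℝ := fun k =>
  if ∃ n : ℕ, 1 ≤ n ∧ 2 ^ (2 * n) < k ∧ k ≤ 2 ^ (2 * n + 1) then 2 else 1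
namespace Stmt17

/-- The centered sequence `z = y - 3/2`. -/
noncomputable def zz : ℕ → ℝ := fun k => yseq2 k - 3/2

lemma yseq2_block {n k : ℕ} (hn : 1 ≤ n) (h1 : 2 ^ (2*n) < k) (h2 : k ≤ 2 ^ (2*n+1)) :
    yseq2 k = 2 := by
  unfold yseq2
  rw [if_pos ⟨n, hn, h1, h2⟩]

lemma yseq2_gap {n k : ℕ} (hn : 1 ≤ n) (h1 : 2 ^ (2*n+1) < k) (h2 : k ≤ 2 ^ (2*n+2)) :
    yseq2 k = 1 := by
  unfold yseq2
  rw [if_neg]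
  rintro ⟨m, hm, a, b⟩
  rcases le_or_gt m n with h | h
  · have : (2:ℕ) ^ (2*m+1) ≤ 2 ^ (2*n+1) := Nat.pow_le_pow_right (by norm_num) (by omega)
    omega
  · have : (2:ℕ) ^ (2*n+2) ≤ 2 ^ (2*m) := Nat.pow_le_pow_right (by norm_num) (by omega)
    omega

lemma yseq2_low {k : ℕ} (h : k ≤ 4) : yseq2 k = 1 := by
  unfold yseq2
  rw [if_neg]
  rintro ⟨m, hm, a, b⟩
  have : (2:ℕ) ^ (2*1) ≤ 2 ^ (2*m) := Nat.pow_le_pow_right (by norm_num) (by omega)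
  have : (2:ℕ) ^ (2*1) = 4 := by norm_num
  omega

lemma zz_block {n k : ℕ} (hn : 1 ≤ n) (h1 : 2 ^ (2*n) < k) (h2 : k ≤ 2 ^ (2*n+1)) :
    zz k = 1/2 := by
  unfold zz; rw [yseq2_block hn h1 h2]; norm_num

lemma zz_gap {n k : ℕ} (hn : 1 ≤ n) (h1 : 2 ^ (2*n+1) < k) (h2 : k ≤ 2 ^ (2*n+2)) :
    zz k = -(1/2) := by
  unfold zz; rw [yseq2_gap hn h1 h2]; norm_num

lemma zz_low {k : ℕ} (h : k ≤ 4) : zz k = -(1/2) := by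
  unfold zz; rw [yseq2_low h]; norm_num

lemma zz_abs (k : ℕ) : |zz k| ≤ 1/2 := by
  unfold zz yseq2
  split <;> norm_num [abs_le]

end Stmt17
namespace Stmt17

noncomputable def Sz (M : ℕ) : ℝ := ∑ k ∈ Finset.range M, zz k
noncomputable def Sp (M : ℕ) : ℝ := ∑ k ∈ Finset.range M, zz k / ((k:ℝ)+1)
noncomputable def Pf : ℕ → ℝ := fun N => Sp (N+1)
noncomputable def rr : ℕ → ℝ := fun N => Pf N / ((N:ℝ)+1)

lemma sum_split (f : ℕ → ℝ) {m M : ℕ} (h : m ≤ M) :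
    ∑ k ∈ Finset.range M, f k
      = (∑ k ∈ Finset.range m, f k) + ∑ k ∈ Finset.Ico m M, f k := by
  rw [Finset.range_eq_Ico, Finset.range_eq_Ico]
  exact (Finset.sum_Ico_consecutive f (Nat.zero_le m) h).symm

lemma Sz_mid {n : ℕ} (hn : 1 ≤ n) :
    Sz (2^(2*n+1)+1) = Sz (2^(2*n)+1) + (2:ℝ)^(2*n)/2 := by
  have hle : 2^(2*n)+1 ≤ 2^(2*n+1)+1 := by
    have := Nat.pow_le_pow_right (show 1 ≤ 2 by norm_num) (show 2*n ≤ 2*n+1 by omega)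
    omega
  unfold Sz
  rw [sum_split _ hle]
  have hconst : ∑ k ∈ Finset.Ico (2^(2*n)+1) (2^(2*n+1)+1), zz k
      = ∑ _k ∈ Finset.Ico (2^(2*n)+1) (2^(2*n+1)+1), (1/2 : ℝ) := by
    apply Finset.sum_congr rfl
    intro k hk
    rw [Finset.mem_Ico] at hk
    exact zz_block hn (by omega) (by omega)
  rw [hconst, Finset.sum_const, Nat.card_Ico]
  have hcard : 2^(2*n+1)+1 - (2^(2*n)+1) = 2^(2*n) := by
    rw [pow_succ]; omega
  rw [hcard, nsmul_eq_mul]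
  push_cast
  ring

lemma Sz_end {n : ℕ} (hn : 1 ≤ n) :
    Sz (2^(2*n+2)+1) = Sz (2^(2*n+1)+1) - (2:ℝ)^(2*n+1)/2 := by
  have hle : 2^(2*n+1)+1 ≤ 2^(2*n+2)+1 := by
    have := Nat.pow_le_pow_right (show 1 ≤ 2 by norm_num) (show 2*n+1 ≤ 2*n+2 by omega)
    omega
  unfold Sz
  rw [sum_split _ hle]
  have hconst : ∑ k ∈ Finset.Ico (2^(2*n+1)+1) (2^(2*n+2)+1), zz k
      = ∑ _k ∈ Finset.Ico (2^(2*n+1)+1) (2^(2*n+2)+1), (-(1/2) : ℝ) := by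
    apply Finset.sum_congr rfl
    intro k hk
    rw [Finset.mem_Ico] at hk
    exact zz_gap hn (by omega) (by omega)
  rw [hconst, Finset.sum_const, Nat.card_Ico]
  have hcard : 2^(2*n+2)+1 - (2^(2*n+1)+1) = 2^(2*n+1) := by
    rw [pow_succ 2 (2*n+1)]; omega
  rw [hcard, nsmul_eq_mul]
  push_cast
  ring

lemma Sz5 : Sz 5 = -(5/2) := by
  unfold Sz
  rw [Finset.sum_range_succ, Finset.sum_range_succ, Finset.sum_range_succ,
    Finset.sum_range_succ, Finset.sum_range_succ, Finset.sum_range_zero]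
  rw [zz_low (by norm_num), zz_low (by norm_num), zz_low (by norm_num),
    zz_low (by norm_num), zz_low (by norm_num)]
  push_cast
  norm_num

lemma Sz_closed : ∀ n, 1 ≤ n → Sz (2^(2*n)+1) = -((2:ℝ)^(2*n))/6 - 11/6 := by
  intro n hn
  induction n, hn using Nat.le_induction with
  | base =>
    have : (2:ℕ)^(2*1) = 4 := by norm_num
    rw [show (2:ℕ)^(2*1)+1 = 5 by norm_num, Sz5]
    norm_num
  | succ n hn ih =>
    have h1 : 2*(n+1) = 2*n+2 := by ring
    rw [h1, Sz_end hn, Sz_mid hn, ih]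
    ring

lemma Sz_mid_closed {n : ℕ} (hn : 1 ≤ n) :
    Sz (2^(2*n+1)+1) = (2:ℝ)^(2*n)/3 - 11/6 := by
  rw [Sz_mid hn, Sz_closed n hn]; ring

lemma sum_yseq2 (M : ℕ) :
    ∑ k ∈ Finset.range M, yseq2 k = Sz M + (3/2) * M := by
  unfold Sz
  have : ∀ k ∈ Finset.range M, yseq2 k = zz k + 3/2 := by
    intro k _; unfold zz; ring
  rw [Finset.sum_congr rfl this, Finset.sum_add_distrib, Finset.sum_const,
    Finset.card_range, nsmul_eq_mul]
  ring

lemma ces_mid {n : ℕ} (hn : 1 ≤ n) :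
    Ces yseq2 (2^(2*n+1)) = 5/3 - 2/((2:ℝ)^(2*n+1)+1) := by
  unfold Ces
  rw [sum_yseq2, Sz_mid_closed hn]
  have hpos : (0:ℝ) < (2:ℝ)^(2*n) := by positivity
  push_cast
  rw [pow_succ]
  field_simp
  ring

lemma ces_end {n : ℕ} (hn : 1 ≤ n) :
    Ces yseq2 (2^(2*n+2)) = 4/3 - 5/(3*((2:ℝ)^(2*n+2)+1)) := by
  unfold Ces
  have h1 : (2:ℕ)^(2*n+2) = 2^(2*(n+1)) := by ring_nf
  rw [sum_yseq2, h1, Sz_closed (n+1) (by omega)]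
  have hpos : (0:ℝ) < (2:ℝ)^(2*(n+1)) := by positivity
  push_cast
  have h2 : (2:ℝ)^(2*(n+1)) = 2^(2*n+2) := by ring_nf
  rw [h2] at *
  field_simp
  ring

end Stmt17
namespace Stmt17

lemma pow_seq_tendsto (c : ℕ) :
    Filter.Tendsto (fun n : ℕ => (2:ℝ)^(2*n+c)+1) Filter.atTop Filter.atTop := by
  apply Filter.tendsto_atTop_add_const_right
  have h1 : Filter.Tendsto (fun n : ℕ => (2:ℝ)^n) Filter.atTop Filter.atTop :=
    tendsto_pow_atTop_atTop_of_one_lt (by norm_num)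
  have h2 : Filter.Tendsto (fun n : ℕ => 2*n+c) Filter.atTop Filter.atTop := by
    apply Filter.tendsto_atTop_mono (f := fun n : ℕ => n) (by intro n; show n ≤ 2*n+c; omega)
    exact Filter.tendsto_id
  exact h1.comp h2

lemma nat_pow_tendsto (c : ℕ) :
    Filter.Tendsto (fun n : ℕ => 2^(2*n+c) : ℕ → ℕ) Filter.atTop Filter.atTop := by
  apply Filter.tendsto_atTop_mono (f := fun n : ℕ => n)
  · intro n
    calc n ≤ 2^n := Nat.le_of_lt (Nat.lt_two_pow_self)
    _ ≤ 2^(2*n+c) := Nat.pow_le_pow_right (by norm_num) (by omega)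
  · exact Filter.tendsto_id

lemma part1 : ¬ ∃ a : ℝ, Filter.Tendsto (Ces yseq2) Filter.atTop (nhds a) := by
  rintro ⟨a, ha⟩
  have hmid : Filter.Tendsto (fun n : ℕ => Ces yseq2 (2^(2*n+1)))
      Filter.atTop (nhds a) := ha.comp (nat_pow_tendsto 1)
  have hend : Filter.Tendsto (fun n : ℕ => Ces yseq2 (2^(2*n+2)))
      Filter.atTop (nhds a) := ha.comp (nat_pow_tendsto 2)
  have hmid' : Filter.Tendsto (fun n : ℕ => 5/3 - 2/((2:ℝ)^(2*n+1)+1))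
      Filter.atTop (nhds a) := by
    apply hmid.congr'
    filter_upwards [Filter.eventually_ge_atTop 1] with n hn
    exact ces_mid hn
  have hend' : Filter.Tendsto (fun n : ℕ => 4/3 - 5/(3*((2:ℝ)^(2*n+2)+1)))
      Filter.atTop (nhds a) := by
    apply hend.congr'
    filter_upwards [Filter.eventually_ge_atTop 1] with n hn
    exact ces_end hn
  have lim1 : Filter.Tendsto (fun n : ℕ => 5/3 - 2/((2:ℝ)^(2*n+1)+1))
      Filter.atTop (nhds (5/3)) := by
    have h0 : Filter.Tendsto (fun n : ℕ => 2/((2:ℝ)^(2*n+1)+1))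
        Filter.atTop (nhds 0) := Filter.Tendsto.div_atTop tendsto_const_nhds (pow_seq_tendsto 1)
    simpa using tendsto_const_nhds.sub h0
  have lim2 : Filter.Tendsto (fun n : ℕ => 4/3 - 5/(3*((2:ℝ)^(2*n+2)+1)))
      Filter.atTop (nhds (4/3)) := by
    have hd : Filter.Tendsto (fun n : ℕ => 3*((2:ℝ)^(2*n+2)+1))
        Filter.atTop Filter.atTop :=
      Filter.Tendsto.const_mul_atTop (by norm_num) (pow_seq_tendsto 2)
    have h0 : Filter.Tendsto (fun n : ℕ => 5/(3*((2:ℝ)^(2*n+2)+1)))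
        Filter.atTop (nhds 0) := Filter.Tendsto.div_atTop tendsto_const_nhds hd
    simpa using tendsto_const_nhds.sub h0
  have e1 : a = 5/3 := tendsto_nhds_unique hmid' lim1
  have e2 : a = 4/3 := tendsto_nhds_unique hend' lim2
  rw [e1] at e2
  norm_num at e2

end Stmt17
namespace Stmt17

lemma sum_nonneg_half (a M : ℕ) :
    0 ≤ ∑ k ∈ Finset.Ico a M, (1/2:ℝ)/((k:ℝ)+1) := by
  apply Finset.sum_nonneg
  intro k _
  positivity

lemma sum_const_div_le {b M : ℕ} (h2 : M ≤ 2*b+1) :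
    ∑ k ∈ Finset.Ico (b+1) M, (1/2:ℝ)/((k:ℝ)+1) ≤ 1/2 := by
  have hb2 : (0:ℝ) < (b:ℝ)+2 := by positivity
  calc ∑ k ∈ Finset.Ico (b+1) M, (1/2:ℝ)/((k:ℝ)+1)
      ≤ ∑ _k ∈ Finset.Ico (b+1) M, (1/2:ℝ)/((b:ℝ)+2) := by
        apply Finset.sum_le_sum
        intro k hk
        rw [Finset.mem_Ico] at hk
        have : (b:ℝ)+2 ≤ (k:ℝ)+1 := by
          have : (b:ℕ)+1 ≤ k := hk.1
          have := (Nat.cast_le (α := ℝ)).mpr this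
          push_cast at this ⊢
          linarith
        gcongr
    _ = ((M - (b+1) : ℕ):ℝ) * ((1/2)/((b:ℝ)+2)) := by
        rw [Finset.sum_const, Nat.card_Ico, nsmul_eq_mul]
    _ ≤ ((b:ℕ):ℝ) * ((1/2)/((b:ℝ)+2)) := by
        apply mul_le_mul_of_nonneg_right _ (by positivity)
        exact_mod_cast (by omega : M - (b+1) ≤ b)
    _ ≤ 1/2 := by
        have ht : (0:ℝ) ≤ (b:ℝ) := Nat.cast_nonneg _
        have h4 : (0:ℝ) < 2*((b:ℝ)+2) := by positivity
        rw [show ((b:ℕ):ℝ) * ((1/2)/((b:ℝ)+2)) = (b:ℝ)*(1/2)/((b:ℝ)+2) by ring,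
          div_le_iff₀ hb2]
        linarith

end Stmt17
namespace Stmt17

lemma Sp_sub_block {n M : ℕ} (hn : 1 ≤ n) (h1 : 2^(2*n)+1 ≤ M) (h2 : M ≤ 2^(2*n+1)+1) :
    Sp M - Sp (2^(2*n)+1) = ∑ k ∈ Finset.Ico (2^(2*n)+1) M, (1/2:ℝ)/((k:ℝ)+1) := by
  unfold Sp
  rw [sum_split _ h1]
  rw [add_sub_cancel_left]
  apply Finset.sum_congr rfl
  intro k hk
  rw [Finset.mem_Ico] at hk
  rw [zz_block hn (by omega) (by omega)]

lemma Sp_sub_gap {n M : ℕ} (hn : 1 ≤ n) (h1 : 2^(2*n+1)+1 ≤ M) (h2 : M ≤ 2^(2*n+2)+1) :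
    Sp M - Sp (2^(2*n+1)+1) = -∑ k ∈ Finset.Ico (2^(2*n+1)+1) M, (1/2:ℝ)/((k:ℝ)+1) := by
  unfold Sp
  rw [sum_split _ h1]
  rw [add_sub_cancel_left, ← Finset.sum_neg_distrib]
  apply Finset.sum_congr rfl
  intro k hk
  rw [Finset.mem_Ico] at hk
  rw [zz_gap hn (by omega) (by omega)]
  ring

lemma pair_sum (f : ℕ → ℝ) (a : ℕ) : ∀ c : ℕ,
    ∑ j ∈ Finset.Ico (2*a+1) (2*a+1+2*c), f j
      = ∑ k ∈ Finset.Ico (a+1) (a+1+c), (f (2*k-1) + f (2*k)) := by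
  intro c
  induction c with
  | zero => simp
  | succ c ih =>
    have e1 : 2*a+1+2*(c+1) = (2*a+1+2*c)+1+1 := by ring
    have e2 : a+1+(c+1) = (a+1+c)+1 := by ring
    rw [e1, e2, Finset.sum_Ico_succ_top (by omega), Finset.sum_Ico_succ_top (by omega),
      Finset.sum_Ico_succ_top (by omega), ih]
    have e3 : 2*(a+1+c)-1 = 2*a+1+2*c := by omega
    have e4 : 2*(a+1+c) = 2*a+1+2*c+1 := by omega
    rw [e3, e4]
    ring

lemma term_est {t : ℝ} (ht : 1 ≤ t) :
    |1/(t+1) - (1/(2*t) + 1/(2*t+1))| ≤ 1/(t*(t+1)) := by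
  have h0 : (0:ℝ) < t := by linarith
  have h1 : (0:ℝ) < t+1 := by linarith
  have h2 : (0:ℝ) < 2*t := by linarith
  have h3 : (0:ℝ) < 2*t+1 := by linarith
  have key : 1/(t+1) - (1/(2*t) + 1/(2*t+1))
      = -(1/(t*(t+1))) + 1/((2*t)*(2*t+1)) := by
    field_simp
    ring
  have hv : (0:ℝ) ≤ 1/((2*t)*(2*t+1)) := by positivity
  have huv : 1/((2*t)*(2*t+1)) ≤ 1/(t*(t+1)) := by
    apply one_div_le_one_div_of_le (by positivity)
    nlinarith
  rw [key, abs_le]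
  constructor <;> linarith

lemma Sp_drift {n : ℕ} (hn : 1 ≤ n) :
    |Sp (2^(2*n+2)+1) - Sp (2^(2*n)+1)| ≤ (1/2) * (1/(2:ℝ)^(2*n)) := by
  set a := 2^(2*n) with ha
  have ha1 : 1 ≤ a := Nat.one_le_two_pow
  have h2a : (2:ℕ)^(2*n+1) = 2*a := by rw [pow_succ]; ring
  have h4a : (2:ℕ)^(2*n+2) = 4*a := by rw [pow_succ, pow_succ]; ring
  have hblock : Sp (2^(2*n+1)+1) - Sp (2^(2*n)+1)
      = ∑ k ∈ Finset.Ico (a+1) (2*a+1), (1/2:ℝ)/((k:ℝ)+1) := by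
    rw [Sp_sub_block hn (by omega) (by omega), h2a]
  have hgap : Sp (2^(2*n+2)+1) - Sp (2^(2*n+1)+1)
      = -∑ j ∈ Finset.Ico (2*a+1) (4*a+1), (1/2:ℝ)/((j:ℝ)+1) := by
    rw [Sp_sub_gap hn (by rw [h2a]; omega) (by rw [h4a]), h2a, h4a]
  have hpair : ∑ j ∈ Finset.Ico (2*a+1) (4*a+1), (1/2:ℝ)/((j:ℝ)+1)
      = ∑ k ∈ Finset.Ico (a+1) (2*a+1),
          ((1/2:ℝ)/(((2*k-1:ℕ):ℝ)+1) + (1/2:ℝ)/(((2*k:ℕ):ℝ)+1)) := by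
    have := pair_sum (fun j => (1/2:ℝ)/((j:ℝ)+1)) a a
    have e : 2*a+1+2*a = 4*a+1 := by ring
    have e' : a+1+a = 2*a+1 := by ring
    rw [e, e'] at this
    exact this
  have total : Sp (2^(2*n+2)+1) - Sp (2^(2*n)+1)
      = ∑ k ∈ Finset.Ico (a+1) (2*a+1),
          ((1/2:ℝ)/((k:ℝ)+1)
            - ((1/2:ℝ)/(((2*k-1:ℕ):ℝ)+1) + (1/2:ℝ)/(((2*k:ℕ):ℝ)+1))) := by
    rw [Finset.sum_sub_distrib, ← hpair, ← hblock]
    linarith [hgap]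
  rw [total]
  have hterm : ∀ k ∈ Finset.Ico (a+1) (2*a+1),
      |(1/2:ℝ)/((k:ℝ)+1)
        - ((1/2:ℝ)/(((2*k-1:ℕ):ℝ)+1) + (1/2:ℝ)/(((2*k:ℕ):ℝ)+1))|
      ≤ (1/2) * (1/(((a:ℝ)+1)*((a:ℝ)+2))) := by
    intro k hk
    rw [Finset.mem_Ico] at hk
    have hk1 : 1 ≤ k := by omega
    have hc1 : (((2*k-1:ℕ):ℝ)) = 2*(k:ℝ)-1 := by
      have : (2*k-1:ℕ) = 2*k-1 := rfl
      push_cast [Nat.cast_sub (by omega : 1 ≤ 2*k)]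
      ring
    have hc2 : (((2*k:ℕ):ℝ)) = 2*(k:ℝ) := by push_cast; ring
    rw [hc1, hc2]
    have e : (1/2:ℝ)/((k:ℝ)+1) - ((1/2:ℝ)/(2*(k:ℝ)-1+1) + (1/2:ℝ)/(2*(k:ℝ)+1))
        = (1/2) * (1/((k:ℝ)+1) - (1/(2*(k:ℝ)) + 1/(2*(k:ℝ)+1))) := by
      rw [show 2*(k:ℝ)-1+1 = 2*(k:ℝ) by ring]
      ring
    rw [e, abs_mul, abs_of_nonneg (by norm_num : (0:ℝ) ≤ (1/2:ℝ))]
    have htk : (1:ℝ) ≤ (k:ℝ) := by exact_mod_cast hk1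
    have := term_est htk
    have hmono : 1/((k:ℝ)*((k:ℝ)+1)) ≤ 1/(((a:ℝ)+1)*((a:ℝ)+2)) := by
      apply one_div_le_one_div_of_le (by positivity)
      have hak : (a:ℝ)+1 ≤ (k:ℝ) := by exact_mod_cast hk.1
      nlinarith
    have h12 : (0:ℝ) ≤ 1/2 := by norm_num
    calc (1/2:ℝ) * |1/((k:ℝ)+1) - (1/(2*(k:ℝ)) + 1/(2*(k:ℝ)+1))|
        ≤ (1/2) * (1/((k:ℝ)*((k:ℝ)+1))) := by
          apply mul_le_mul_of_nonneg_left this h12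
      _ ≤ (1/2) * (1/(((a:ℝ)+1)*((a:ℝ)+2))) := by
          apply mul_le_mul_of_nonneg_left hmono h12
  calc |∑ k ∈ Finset.Ico (a+1) (2*a+1),
          ((1/2:ℝ)/((k:ℝ)+1)
            - ((1/2:ℝ)/(((2*k-1:ℕ):ℝ)+1) + (1/2:ℝ)/(((2*k:ℕ):ℝ)+1)))|
      ≤ ∑ k ∈ Finset.Ico (a+1) (2*a+1),
          |(1/2:ℝ)/((k:ℝ)+1)
            - ((1/2:ℝ)/(((2*k-1:ℕ):ℝ)+1) + (1/2:ℝ)/(((2*k:ℕ):ℝ)+1))| :=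
        Finset.abs_sum_le_sum_abs _ _
    _ ≤ ∑ _k ∈ Finset.Ico (a+1) (2*a+1), (1/2) * (1/(((a:ℝ)+1)*((a:ℝ)+2))) :=
        Finset.sum_le_sum hterm
    _ = ((a:ℕ):ℝ) * ((1/2) * (1/(((a:ℝ)+1)*((a:ℝ)+2)))) := by
        rw [Finset.sum_const, Nat.card_Ico, nsmul_eq_mul]
        congr 1
        · congr 1
          omega
    _ ≤ (1/2) * (1/(2:ℝ)^(2*n)) := by
        have hA : ((a:ℕ):ℝ) = (2:ℝ)^(2*n) := by rw [ha]; push_cast; ring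
        rw [hA]
        have hApos : (0:ℝ) < (2:ℝ)^(2*n) := by positivity
        set A := (2:ℝ)^(2*n)
        rw [show A * ((1/2) * (1/((A+1)*(A+2)))) = (A*(1/2))/((A+1)*(A+2)) by ring,
          div_le_iff₀ (by positivity)]
        rw [show (1/2) * (1/A) * ((A+1)*(A+2)) = ((A+1)*(A+2))*(1/2)/A by ring,
          le_div_iff₀ hApos]
        nlinarith
end Stmt17
namespace Stmt17

lemma Sp5 : Sp 5 = -(137/120) := by
  unfold Sp
  rw [Finset.sum_range_succ, Finset.sum_range_succ, Finset.sum_range_succ,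
    Finset.sum_range_succ, Finset.sum_range_succ, Finset.sum_range_zero]
  rw [zz_low (by norm_num), zz_low (by norm_num), zz_low (by norm_num),
    zz_low (by norm_num), zz_low (by norm_num)]
  push_cast
  norm_num

lemma Sp_endpoint : ∀ n, 1 ≤ n → |Sp (2^(2*n)+1)| ≤ 3/2 - 1/(2:ℝ)^(2*n) := by
  intro n hn
  induction n, hn using Nat.le_induction with
  | base =>
    rw [show (2:ℕ)^(2*1)+1 = 5 by norm_num, Sp5]
    rw [show (2:ℝ)^(2*1) = 4 by norm_num]
    rw [abs_of_nonpos (by norm_num)]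
    norm_num
  | succ n hn ih =>
    have hd := Sp_drift hn
    have e1 : 2*(n+1) = 2*n+2 := by ring
    rw [e1]
    have hA : (0:ℝ) < (2:ℝ)^(2*n) := by positivity
    have e2 : (2:ℝ)^(2*n+2) = 4*(2:ℝ)^(2*n) := by rw [pow_succ, pow_succ]; ring
    calc |Sp (2^(2*n+2)+1)|
        ≤ |Sp (2^(2*n)+1)| + |Sp (2^(2*n+2)+1) - Sp (2^(2*n)+1)| := by
          have := abs_add_le (Sp (2^(2*n)+1)) (Sp (2^(2*n+2)+1) - Sp (2^(2*n)+1))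
          simpa using this
      _ ≤ (3/2 - 1/(2:ℝ)^(2*n)) + (1/2) * (1/(2:ℝ)^(2*n)) := add_le_add ih hd
      _ ≤ 3/2 - 1/(2:ℝ)^(2*n+2) := by
          rw [e2]
          have : 1/(4*(2:ℝ)^(2*n)) ≤ (1/2) * (1/(2:ℝ)^(2*n)) := by
            rw [div_le_iff₀ (by positivity)]
            rw [show (1/2) * (1/(2:ℝ)^(2*n)) * (4*(2:ℝ)^(2*n))
              = 2*((2:ℝ)^(2*n)/(2:ℝ)^(2*n)) by ring, div_self (ne_of_gt hA)]
            norm_num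
          linarith

lemma structure_lemma : ∀ M, 5 ≤ M → ∃ n, 1 ≤ n ∧ 2^(2*n) < M ∧ M ≤ 2^(2*n+2) := by
  intro M hM
  induction M, hM using Nat.le_induction with
  | base => exact ⟨1, le_refl 1, by norm_num, by norm_num⟩
  | succ M hM ih =>
    obtain ⟨n, hn, h1, h2⟩ := ih
    rcases lt_or_eq_of_le h2 with h | h
    · exact ⟨n, hn, by omega, by omega⟩
    · refine ⟨n+1, by omega, ?_, ?_⟩
      · have e0 : 2*(n+1) = 2*n+2 := by ring
        rw [e0]
        omega
      · have e : 2*(n+1)+2 = (2*n+2)+2 := by ring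
        rw [e]
        have : (2:ℕ)^(2*n+2) ≥ 1 := Nat.one_le_two_pow
        have : (2:ℕ)^((2*n+2)+2) = 4 * 2^(2*n+2) := by rw [pow_succ, pow_succ]; ring
        omega

lemma Sp_bound : ∀ M, |Sp M| ≤ 3 := by
  intro M
  rcases le_or_gt M 5 with hM | hM
  · have : |Sp M| ≤ ∑ k ∈ Finset.range M, |zz k / ((k:ℝ)+1)| :=
      Finset.abs_sum_le_sum_abs _ _
    have hterm : ∀ k ∈ Finset.range M, |zz k / ((k:ℝ)+1)| ≤ 1/2 := by
      intro k _
      rw [abs_div, abs_of_pos (by positivity : (0:ℝ) < (k:ℝ)+1)]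
      calc |zz k| / ((k:ℝ)+1) ≤ |zz k| := by
            apply div_le_self (abs_nonneg _)
            have : (0:ℝ) ≤ (k:ℝ) := Nat.cast_nonneg _
            linarith
        _ ≤ 1/2 := zz_abs k
    calc |Sp M| ≤ ∑ k ∈ Finset.range M, |zz k / ((k:ℝ)+1)| := this
      _ ≤ ∑ _k ∈ Finset.range M, (1/2:ℝ) := Finset.sum_le_sum hterm
      _ = (M:ℝ) * (1/2) := by rw [Finset.sum_const, Finset.card_range, nsmul_eq_mul]
      _ ≤ 3 := by
          have : (M:ℝ) ≤ 5 := by exact_mod_cast hM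
          linarith
  · obtain ⟨n, hn, h1, h2⟩ := structure_lemma M (by omega)
    have hend := Sp_endpoint n hn
    have hendb : |Sp (2^(2*n)+1)| ≤ 3/2 := by
      have : (0:ℝ) < 1/(2:ℝ)^(2*n) := by positivity
      linarith
    have h2a : (2:ℕ)^(2*n+1) = 2*2^(2*n) := by rw [pow_succ]; ring
    rcases le_or_gt M (2^(2*n+1)+1) with hc | hc
    · -- block region
      have hsub := Sp_sub_block hn (by omega) hc
      have hub : Sp M - Sp (2^(2*n)+1) ≤ 1/2 := by
        rw [hsub]
        have := sum_const_div_le (b := 2^(2*n)) (M := M) (by omega)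
        exact this
      have hlb : 0 ≤ Sp M - Sp (2^(2*n)+1) := by rw [hsub]; exact sum_nonneg_half _ _
      rw [abs_le] at hendb ⊢
      constructor <;> [linarith [hendb.1]; linarith [hendb.2]]
    · -- gap region
      have hmid : |Sp (2^(2*n+1)+1) - Sp (2^(2*n)+1)| ≤ 1/2 := by
        rw [Sp_sub_block hn (by omega) (le_refl _)]
        rw [abs_of_nonneg (sum_nonneg_half _ _)]
        exact sum_const_div_le (b := 2^(2*n)) (by omega)
      have hsub := Sp_sub_gap (M := M) hn (by omega) (by omega)
      have hgapb : |Sp M - Sp (2^(2*n+1)+1)| ≤ 1/2 := by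
        rw [hsub, abs_neg, abs_of_nonneg (sum_nonneg_half _ _)]
        have h4a : (2:ℕ)^(2*n+2) = 2*(2^(2*n+1)) := by rw [pow_succ 2 (2*n+1)]; ring
        exact sum_const_div_le (b := 2^(2*n+1)) (by omega)
      calc |Sp M| = |Sp (2^(2*n)+1) + (Sp (2^(2*n+1)+1) - Sp (2^(2*n)+1))
            + (Sp M - Sp (2^(2*n+1)+1))| := by ring_nf
        _ ≤ |Sp (2^(2*n)+1)| + |Sp (2^(2*n+1)+1) - Sp (2^(2*n)+1)|
            + |Sp M - Sp (2^(2*n+1)+1)| := abs_add_three _ _ _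
        _ ≤ 3/2 + 1/2 + 1/2 := by
            exact add_le_add (add_le_add hendb hmid) hgapb
        _ ≤ 3 := by norm_num

lemma Pf_bound (N : ℕ) : |Pf N| ≤ 3 := Sp_bound (N+1)

end Stmt17
namespace Stmt17

lemma abel : ∀ N : ℕ, Sz (N+1) = ((N:ℝ)+1) * Pf N - ∑ k ∈ Finset.range N, Pf k := by
  intro N
  induction N with
  | zero =>
    unfold Sz Pf Sp
    simp
  | succ N ih =>
    have hSz : Sz (N+2) = Sz (N+1) + zz (N+1) := by
      unfold Sz; rw [Finset.sum_range_succ]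
    have hPf : Pf (N+1) = Pf N + zz (N+1)/(((N:ℝ)+1)+1) := by
      unfold Pf Sp
      rw [Finset.sum_range_succ]
      push_cast
      ring
    rw [hSz, ih, Finset.sum_range_succ, hPf]
    have hne : ((N:ℝ)+1)+1 ≠ 0 := by positivity
    push_cast
    field_simp
    ring

lemma ces_identity : Ces zz = (Pf + rr) + (-1:ℝ) • Ces Pf := by
  funext N
  simp only [Pi.add_apply, Pi.smul_apply, smul_eq_mul]
  have h1 : Ces zz N = Sz (N+1) / ((N:ℝ)+1) := rfl
  have h2 : Ces Pf N = ((∑ k ∈ Finset.range N, Pf k) + Pf N) / ((N:ℝ)+1) := by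
    unfold Ces
    rw [Finset.sum_range_succ]
  rw [h1, h2, abel N]
  unfold rr
  have hne : ((N:ℝ)+1) ≠ 0 := by positivity
  field_simp
  ring

end Stmt17
namespace Stmt17

lemma bdd_of_abs_le {x : ℕ → ℝ} {c : ℝ} (h : ∀ n, |x n| ≤ c) : Bdd x := ⟨c, h⟩

lemma bdd_const (c : ℝ) : Bdd (fun _ => c) := ⟨|c|, fun _ => le_refl _⟩

lemma bdd_add {x y : ℕ → ℝ} (hx : Bdd x) (hy : Bdd y) : Bdd (x + y) := by
  obtain ⟨Mx, hMx⟩ := hx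
  obtain ⟨My, hMy⟩ := hy
  refine ⟨Mx + My, fun n => ?_⟩
  calc |(x+y) n| = |x n + y n| := rfl
    _ ≤ |x n| + |y n| := abs_add_le _ _
    _ ≤ Mx + My := add_le_add (hMx n) (hMy n)

lemma bdd_smul (c : ℝ) {x : ℕ → ℝ} (hx : Bdd x) : Bdd (c • x) := by
  obtain ⟨Mx, hMx⟩ := hx
  refine ⟨|c| * Mx, fun n => ?_⟩
  calc |(c • x) n| = |c| * |x n| := by simp [abs_mul]
    _ ≤ |c| * Mx := mul_le_mul_of_nonneg_left (hMx n) (abs_nonneg _)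

lemma bdd_Ces {x : ℕ → ℝ} (hx : Bdd x) : Bdd (Ces x) := by
  obtain ⟨Mx, hMx⟩ := hx
  refine ⟨Mx, fun N => ?_⟩
  unfold Ces
  have hpos : (0:ℝ) < (N:ℝ)+1 := by positivity
  rw [abs_div, abs_of_pos hpos]
  rw [div_le_iff₀ hpos]
  calc |∑ k ∈ Finset.range (N+1), x k| ≤ ∑ k ∈ Finset.range (N+1), |x k| :=
      Finset.abs_sum_le_sum_abs _ _
    _ ≤ ∑ _k ∈ Finset.range (N+1), Mx := Finset.sum_le_sum fun k _ => hMx k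
    _ = ((N:ℝ)+1) * Mx := by
        rw [Finset.sum_const, Finset.card_range, nsmul_eq_mul]; push_cast; ring
    _ = Mx * ((N:ℝ)+1) := by ring

lemma bdd_zz : Bdd zz := ⟨1/2, zz_abs⟩

lemma bdd_Pf : Bdd Pf := ⟨3, Pf_bound⟩

lemma rr_abs (N : ℕ) : |rr N| ≤ 3/((N:ℝ)+1) := by
  unfold rr
  have hpos : (0:ℝ) < (N:ℝ)+1 := by positivity
  rw [abs_div, abs_of_pos hpos]
  gcongr
  exact Pf_bound N

lemma bdd_rr : Bdd rr := by
  refine ⟨3, fun N => ?_⟩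
  refine (rr_abs N).trans ?_
  have hpos : (0:ℝ) < (N:ℝ)+1 := by positivity
  rw [div_le_iff₀ hpos]
  have : (0:ℝ) ≤ (N:ℝ) := Nat.cast_nonneg _
  nlinarith

/-- the indicator of `{j}` -/
def ee (j : ℕ) : ℕ → ℝ := fun k => if k = j then 1 else 0

lemma bdd_ee (j : ℕ) : Bdd (ee j) := by
  refine ⟨1, fun n => ?_⟩
  unfold ee
  split <;> norm_num

lemma shift_ee (j : ℕ) : Sfun (ee j) = ee (j+1) := by
  funext k
  cases k with
  | zero => simp [Sfun, ee]
  | succ k => simp [Sfun, ee]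

lemma bdd_fin {m : ℕ} {x : ℕ → ℝ} (h : ∀ k, m ≤ k → x k = 0) : Bdd x := by
  refine ⟨∑ j ∈ Finset.range m, |x j|, fun k => ?_⟩
  by_cases hk : k < m
  · exact Finset.single_le_sum (f := fun j => |x j|) (fun j _ => abs_nonneg _)
      (Finset.mem_range.mpr hk)
  · rw [h k (by omega), abs_zero]
    exact Finset.sum_nonneg fun j _ => abs_nonneg _

section BL

variable {B : (ℕ → ℝ) → ℝ} (hB : IsBanachLimit B)
include hB

lemma bl_add {x y : ℕ → ℝ} (hx : Bdd x) (hy : Bdd y) : B (x + y) = B x + B y :=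
  hB.1 x y hx hy

lemma bl_smul (c : ℝ) {x : ℕ → ℝ} (hx : Bdd x) : B (c • x) = c * B x :=
  hB.2.1 c x hx

lemma bl_zero : B (fun _ => (0:ℝ)) = 0 := by
  have h := hB.1 (fun _ => 0) (fun _ => 0) (bdd_const 0) (bdd_const 0)
  have e : ((fun _:ℕ => (0:ℝ)) + fun _:ℕ => (0:ℝ)) = fun _:ℕ => (0:ℝ) := by
    funext k; simp
  rw [e] at h
  linarith

lemma bl_mono {x y : ℕ → ℝ} (hx : Bdd x) (hy : Bdd y) (h : ∀ k, x k ≤ y k) :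
    B x ≤ B y := by
  set d : ℕ → ℝ := fun k => y k - x k with hd
  have hbd : Bdd d := by
    obtain ⟨Mx, hMx⟩ := hx; obtain ⟨My, hMy⟩ := hy
    refine ⟨My + Mx, fun n => ?_⟩
    have := abs_sub (y n) (x n)
    calc |d n| = |y n - x n| := rfl
      _ ≤ |y n| + |x n| := abs_sub _ _
      _ ≤ My + Mx := add_le_add (hMy n) (hMx n)
  have hxy : y = x + d := by funext k; simp [hd]
  have hpos : 0 ≤ B d := by
    apply hB.2.2.1 d hbd
    intro k
    simp [hd]
    linarith [h k]
  rw [hxy, bl_add hB hx hbd]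
  linarith

lemma bl_const (c : ℝ) : B (fun _ => c) = c := by
  have h := bl_smul hB c (bdd_const 1)
  have e : (c • fun _:ℕ => (1:ℝ)) = fun _:ℕ => c := by funext k; simp
  rw [e] at h
  rw [h, hB.2.2.2.1]
  ring

lemma bl_abs_le {x : ℕ → ℝ} {c : ℝ} (hx : Bdd x) (h : ∀ k, |x k| ≤ c) :
    |B x| ≤ c := by
  rw [abs_le]
  constructor
  · have := bl_mono hB (bdd_const (-c)) hx (fun k => by
      have := abs_le.mp (h k); linarith [this.1])
    rw [bl_const hB] at this
    linarith
  · have := bl_mono hB hx (bdd_const c) (fun k => (abs_le.mp (h k)).2)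
    rw [bl_const hB] at this
    linarith

lemma bl_ee_eq (j : ℕ) : B (ee j) = B (ee 0) := by
  induction j with
  | zero => rfl
  | succ j ih =>
    rw [← shift_ee j, hB.2.2.2.2 (ee j) (bdd_ee j), ih]

lemma bl_ee_zero : B (ee 0) = 0 := by
  set g : ℕ → (ℕ → ℝ) := fun m k => if k < m then 1 else 0 with hg
  have bdd_g : ∀ m, Bdd (g m) := by
    intro m
    refine ⟨1, fun n => ?_⟩
    simp only [hg]
    split <;> norm_num
  have hgm : ∀ m : ℕ, B (g m) = m * B (ee 0) := by
    intro m
    induction m with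
    | zero =>
      have e : g 0 = fun _ => (0:ℝ) := by funext k; simp [hg]
      rw [e, bl_zero hB]
      simp
    | succ m ih =>
      have e : g (m+1) = g m + ee m := by
        funext k
        by_cases h1 : k = m
        · simp [hg, ee, h1]
        · by_cases h2 : k < m
          · simp [hg, ee, h1, h2, Nat.lt_succ_of_lt h2]
          · have h3 : ¬ k < m + 1 := by omega
            simp [hg, ee, h1, h2, h3]
      rw [e, bl_add hB (bdd_g m) (bdd_ee m), ih, bl_ee_eq hB m]
      push_cast
      ring
  have hle : ∀ m : ℕ, (m:ℝ) * B (ee 0) ≤ 1 := by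
    intro m
    have h1 : B (g m) ≤ B (fun _ => (1:ℝ)) := by
      apply bl_mono hB (bdd_g m) (bdd_const 1)
      intro k
      simp only [hg]
      split <;> norm_num
    rw [hgm m, hB.2.2.2.1] at h1
    exact h1
  have hpos : 0 ≤ B (ee 0) := by
    apply hB.2.2.1 _ (bdd_ee 0)
    intro k
    unfold ee
    split <;> norm_num
  by_contra hne
  have hgt : 0 < B (ee 0) := lt_of_le_of_ne hpos (Ne.symm hne)
  obtain ⟨m, hm⟩ := exists_nat_gt (1 / B (ee 0))
  have := hle m
  rw [div_lt_iff₀ hgt] at hm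
  linarith

lemma bl_fin : ∀ (m : ℕ) (x : ℕ → ℝ), (∀ k, m ≤ k → x k = 0) → B x = 0 := by
  intro m
  induction m with
  | zero =>
    intro x h
    have e : x = fun _ => (0:ℝ) := by funext k; exact h k (Nat.zero_le k)
    rw [e, bl_zero hB]
  | succ m ih =>
    intro x h
    set x' : ℕ → ℝ := fun k => if k = m then 0 else x k with hx'
    have h' : ∀ k, m ≤ k → x' k = 0 := by
      intro k hk
      by_cases he : k = m
      · simp [hx', he]
      · simp [hx', he]
        exact h k (by omega)
    have e : x = x' + (x m) • ee m := by
      funext k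
      by_cases he : k = m
      · simp [hx', ee, he]
      · simp [hx', ee, he]
    rw [e, bl_add hB (bdd_fin h') (bdd_smul _ (bdd_ee m)),
      bl_smul hB _ (bdd_ee m), bl_ee_eq hB m, bl_ee_zero hB, ih x' h']
    ring

lemma bl_null {x : ℕ → ℝ} (hx : Bdd x)
    (h : ∀ ε : ℝ, 0 < ε → ∃ m, ∀ k, m ≤ k → |x k| ≤ ε) : B x = 0 := by
  have key : ∀ ε : ℝ, 0 < ε → |B x| ≤ ε := by
    intro ε hε
    obtain ⟨m, hm⟩ := h ε hε
    set xt : ℕ → ℝ := fun k => if k < m then 0 else x k with hxt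
    set xh : ℕ → ℝ := fun k => if k < m then x k else 0 with hxh
    have e : x = xt + xh := by
      funext k
      by_cases hk : k < m <;> simp [hxt, hxh, hk]
    have hfin : ∀ k, m ≤ k → xh k = 0 := by
      intro k hk
      simp [hxh, Nat.not_lt.mpr hk]
    have hbt : ∀ k, |xt k| ≤ ε := by
      intro k
      by_cases hk : k < m
      · simp [hxt, hk]; linarith
      · simp [hxt, hk]
        exact hm k (by omega)
    have hBxh : B xh = 0 := bl_fin hB m xh hfin
    have hBxt : |B xt| ≤ ε := bl_abs_le hB (bdd_of_abs_le hbt) hbt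
    rw [e, bl_add hB (bdd_of_abs_le hbt) (bdd_fin hfin), hBxh, add_zero]
    exact hBxt
  by_contra hne
  have h0 : 0 < |B x| := abs_pos.mpr hne
  have := key (|B x|/2) (by linarith)
  linarith

end BL

end Stmt17
namespace Stmt17

lemma part2 : ∀ B : (ℕ → ℝ) → ℝ, IsBanachLimit B →
    (∀ x : ℕ → ℝ, Bdd x → B (Ces x) = B x) → B yseq2 = 3 / 2 := by
  intro B hB hC
  have hrr : B rr = 0 := by
    apply bl_null hB bdd_rr
    intro ε hε
    obtain ⟨m, hm⟩ := exists_nat_gt (3/ε)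
    refine ⟨m, fun k hk => ?_⟩
    refine (rr_abs k).trans ?_
    have hkm : (m:ℝ) ≤ (k:ℝ) := by exact_mod_cast hk
    have hcomp : 3/ε < (k:ℝ)+1 := by linarith
    have hkpos : (0:ℝ) < (k:ℝ)+1 := by positivity
    rw [div_le_iff₀ hkpos]
    rw [div_lt_iff₀ hε] at hcomp
    linarith
  have hCesPf : B (Ces Pf) = B Pf := hC Pf bdd_Pf
  have hzz : B zz = 0 := by
    have h1 : B (Ces zz) = B zz := hC zz bdd_zz
    rw [ces_identity] at h1
    rw [bl_add hB (bdd_add bdd_Pf bdd_rr) (bdd_smul _ (bdd_Ces bdd_Pf)),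
      bl_add hB bdd_Pf bdd_rr, bl_smul hB _ (bdd_Ces bdd_Pf)] at h1
    linarith
  have hdecomp : yseq2 = zz + (fun _ => (3/2:ℝ)) := by
    funext k
    simp [zz]
  rw [hdecomp, bl_add hB bdd_zz (bdd_const _), hzz, bl_const hB]
  ring

end Stmt17

/-- The Cesàro means of `y` do not converge, yet `B(y) = 3/2` for every
Cesàro-invariant Banach limit `B`. -/
theorem stmt_17 :
    (¬ ∃ a : ℝ, Filter.Tendsto (Ces yseq2) Filter.atTop (nhds a)) ∧
    (∀ B : (ℕ → ℝ) → ℝ, IsBanachLimit B →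
      (∀ x : ℕ → ℝ, Bdd x → B (Ces x) = B x) → B yseq2 = 3 / 2) :=
  ⟨Stmt17.part1, Stmt17.part2⟩
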